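/- For any Pareto-optimal point T* of a finite set with strictly positive objectives, choosing weights w_i = 1/f_i(T*) gives max_i w_i f_i(T*) = 1 ≤ max_i w_i f_i(T) for all T ∈ 𝒯, i.e., T* minimizes the Chebyshev cost with these weights. -/
import Mathlib


/-- For a Pareto-optimal `T*`, the weights `w i = 1 / f i T*` make `T*` a
minimizer of the Chebyshev cost, with optimal value `1`. -/
theorem chebyshev_weights_from_pareto_point
    {𝒯 : Type*} [Nonempty 𝒯] [Fintype 𝒯] (n : ℕ)
    (f : Fin (n + 1) → 𝒯 → ℝ) (hf : ∀ i T, 0 < f i T)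
    (Tstar : 𝒯)
    (hpo : ¬ ∃ T : 𝒯, (∀ i, f i T ≤ f i Tstar) ∧ (∃ j, f j T < f j Tstar)) :
    (Finset.univ.sup' Finset.univ_nonempty
        fun i => (1 / f i Tstar) * f i Tstar) = 1 ∧
    ∀ T : 𝒯, (1 : ℝ) ≤
      Finset.univ.sup' Finset.univ_nonempty fun i => (1 / f i Tstar) * f i T := by
  have hconst : ∀ i : Fin (n + 1), (1 / f i Tstar) * f i Tstar = 1 := by
    intro i
    exact one_div_mul_cancel (hf i Tstar).ne'
  constructor
  · rw [Finset.sup'_congr Finset.univ_nonempty rfl (fun i _ => hconst i)]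
    simp
  · intro T
    by_contra h
    push_neg at h
    have hall : ∀ i, f i T < f i Tstar := by
      intro i
      have := (Finset.le_sup' (fun i => (1 / f i Tstar) * f i T)
        (Finset.mem_univ i)).trans_lt h
      have hpos := hf i Tstar
      rw [one_div, inv_mul_lt_iff₀ hpos, mul_one] at this
      exact this
    exact hpo ⟨T, fun i => (hall i).le, ⟨0, hall 0⟩⟩
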